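/- Let (Ω, F, P) be a probability space, let (G_n) be a filtration of sub-σ-fields of F, let Y_∞ and Y_n (n ≥ 1) be real random variables with Y_n measurable with respect to G_n, and let (a_n) be a sequence of real constants with a_n → ∞. For each n let K_n(ω, ·) be a regular conditional distribution of a_n(Y_n − Y_∞) given G_n. If for almost every ω the measures K_n(ω, ·) converge weakly to a probability measure κ_ω on ℝ that is non-degenerate (i.e., not a Dirac point mass), then Y_∞ has no point masses: P(Y_∞ = y) = 0 for every y ∈ ℝ. -/

import Mathlib

open MeasureTheory ProbabilityTheory Filter Topology

namespace RRUPaper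

/-- A two-color randomly reinforced urn model on a probability space `(Ω, P)`.
Colors are indexed by `Fin 2` (index `0` = color 1, index `1` = color 2);
draws are indexed by `1, 2, …` (index `0` of `U`, `X` is an irrelevant dummy). -/
structure RRU {Ω : Type} [MeasurableSpace Ω] (P : Measure Ω) where
  /-- `U n k` : the random reinforcement of color `k` at draw `n` (for `n ≥ 1`). -/
  U : ℕ → Fin 2 → Ω → ℝ
  /-- `X n k = 1` if the ball drawn at draw `n` is of color `k`, else `0` (for `n ≥ 1`). -/
  X : ℕ → Fin 2 → Ω → ℝ
  /-- `Y n k` : the amount of color-`k` balls after `n` draws. -/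
  Y : ℕ → Fin 2 → Ω → ℝ
  /-- the filtration generated by the observations up to time `n`. -/
  F : ℕ → MeasurableSpace Ω
  meas_U : ∀ n k, Measurable (U n k)
  meas_X : ∀ n k, Measurable (X n k)
  U_nonneg : ∀ n k, ∀ᵐ ω ∂P, 0 ≤ U (n + 1) k ω
  X_01 : ∀ n k ω, X (n + 1) k ω = 0 ∨ X (n + 1) k ω = 1
  X_sum : ∀ n ω, X (n + 1) 0 ω + X (n + 1) 1 ω = 1
  Y0_pos : ∀ k ω, 0 < Y 0 k ω
  Y0_const : ∀ k ω ω', Y 0 k ω = Y 0 k ω'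
  Y_rec : ∀ n k ω, Y (n + 1) k ω = Y n k ω + X (n + 1) k ω * U (n + 1) k ω
  F_def : ∀ n, F n = ⨆ l ∈ Set.Icc 1 n, ⨆ k : Fin 2,
      (MeasurableSpace.comap (U l k) inferInstance ⊔ MeasurableSpace.comap (X l k) inferInstance)
  /-- the reinforcement vectors are independent … -/
  indep_U : iIndepFun (fun n ω => (U (n + 1) 0 ω, U (n + 1) 1 ω)) P
  /-- … and identically distributed. -/
  ident_U : ∀ n, IdentDistrib (fun ω => (U (n + 1) 0 ω, U (n + 1) 1 ω))
      (fun ω => (U 1 0 ω, U 1 1 ω)) P P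
  U_int : ∀ k, Integrable (U 1 k) P
  mean_pos : ∀ k, 0 < ∫ ω, U 1 k ω ∂P
  /-- `P(X_{n+1,k} = 1 ∣ F_n) = Y_{n,k} / (Y_{n,1} + Y_{n,2})` (as `X` is `{0,1}`-valued,
  this conditional probability is the conditional expectation of `X`). -/
  condX : ∀ n k, P[X (n + 1) k | F n] =ᵐ[P] fun ω => Y n k ω / (Y n 0 ω + Y n 1 ω)
  /-- the next reinforcement vector is independent of `σ(F_n, X_{n+1})`. -/
  indep_next : ∀ n, Indep
      (MeasurableSpace.comap (fun ω => (U (n + 1) 0 ω, U (n + 1) 1 ω)) inferInstance)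
      (F n ⊔ MeasurableSpace.comap (fun ω => (X (n + 1) 0 ω, X (n + 1) 1 ω)) inferInstance) P

namespace RRU

variable {Ω : Type} [MeasurableSpace Ω] {P : Measure Ω}

/-- the mean reinforcement `m_k = E[U_{1,k}]`. -/
noncomputable def m (M : RRU P) (k : Fin 2) : ℝ := ∫ ω, M.U 1 k ω ∂P

/-- `σ_k² = E[(U_{1,k}/m_k)²]`. -/
noncomputable def sigmaSq (M : RRU P) (k : Fin 2) : ℝ := ∫ ω, (M.U 1 k ω / M.m k) ^ 2 ∂P

/-- `σ_k = √(E[(U_{1,k}/m_k)²])`. -/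
noncomputable def sigma (M : RRU P) (k : Fin 2) : ℝ := Real.sqrt (M.sigmaSq k)

/-- the proportion `Z_n` of color-1 balls in the urn. -/
noncomputable def Z (M : RRU P) (n : ℕ) (ω : Ω) : ℝ := M.Y n 0 ω / (M.Y n 0 ω + M.Y n 1 ω)

/-- `N n k` : the number of times color `k` was drawn in the first `n` draws. -/
noncomputable def N (M : RRU P) (n : ℕ) (k : Fin 2) (ω : Ω) : ℝ := ∑ l ∈ Finset.Icc 1 n, M.X l k ω

/-- `ρ = m₁/m₂`. -/
noncomputable def rho (M : RRU P) : ℝ := M.m 0 / M.m 1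

/-- `ψ_n = Y_{n,1} / Y_{n,2}^ρ`. -/
noncomputable def psi (M : RRU P) (n : ℕ) (ω : Ω) : ℝ := M.Y n 0 ω / (M.Y n 1 ω) ^ M.rho

/-- `E[U_{1,k}^r] < ∞` for `k = 1,2`. -/
def HasMoment (M : RRU P) (r : ℝ) : Prop :=
  ∀ k, Integrable (fun ω => |M.U 1 k ω| ^ r) P

end RRU

/-- `σ̃` built from a candidate limit (or current) proportion `Zf`:
`√(Zf(1−Zf)) ⬝ √((1−Zf)σ₁² + Zf σ₂²)`. -/
noncomputable def sigmaTildeOf {Ω : Type} [MeasurableSpace Ω] {P : Measure Ω}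
    (M : RRU P) (Zf : Ω → ℝ) (ω : Ω) : ℝ :=
  Real.sqrt (Zf ω * (1 - Zf ω)) *
    Real.sqrt ((1 - Zf ω) * M.sigmaSq 0 + Zf ω * M.sigmaSq 1)

/-- `W : [0,∞) × Ω' → ℝ` is a standard Brownian motion: measurable in `ω`, a.s. continuous
paths (on `[0,∞)`), starting at `0`, with Gaussian increments `W_t − W_s ∼ N(0, t−s)`
independent of `σ(W_u : u ≤ s)`. -/
def IsStandardBM {Ω' : Type} [MeasurableSpace Ω'] (P' : Measure Ω') (W : ℝ → Ω' → ℝ) : Prop :=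
  (∀ t, Measurable (W t)) ∧
  (∀ᵐ ω ∂P', ContinuousOn (fun t => W t ω) (Set.Ici 0)) ∧
  (∀ᵐ ω ∂P', W 0 ω = 0) ∧
  ∀ s t : ℝ, 0 ≤ s → s ≤ t →
    Measure.map (fun ω => W t ω - W s ω) P' = gaussianReal 0 (Real.toNNReal (t - s)) ∧
    Indep (MeasurableSpace.comap (fun ω => W t ω - W s ω) inferInstance)
      (⨆ u ∈ Set.Icc (0 : ℝ) s, MeasurableSpace.comap (W u) inferInstance) P'

open scoped ENNReal NNReal

noncomputable def gw (k : ℕ) : ℝ := (2:ℝ)⁻¹ ^ k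

lemma gw_pos (k : ℕ) : 0 < gw k := pow_pos (by norm_num) k

lemma gw_succ (k : ℕ) : gw (k+1) = gw k / 2 := by
  unfold gw; rw [pow_succ]; ring

def gridI (k : ℕ) (j : ℤ) : Set ℝ := Set.Icc ((j:ℝ) * gw k) (((j:ℝ)+1) * gw k)

lemma gridI_subset_succ (k : ℕ) (j : ℤ) : gridI (k+1) j ⊆ gridI k (j / 2) := by
  have hj : (j:ℝ) = 2 * ((j / 2 : ℤ) : ℝ) + ((j % 2 : ℤ) : ℝ) := by
    have h2 := Int.mul_ediv_add_emod j 2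
    have : ((2 * (j / 2) + j % 2 : ℤ) : ℝ) = (j : ℝ) := by exact_mod_cast congrArg (Int.cast : ℤ → ℝ) h2
    push_cast at this
    linarith
  have hr0 : (0:ℝ) ≤ ((j % 2 : ℤ) : ℝ) := by
    exact_mod_cast Int.emod_nonneg j (by norm_num)
  have hr1 : ((j % 2 : ℤ) : ℝ) ≤ 1 := by
    have : (j % 2 : ℤ) ≤ 1 := by omega
    exact_mod_cast this
  apply Set.Icc_subset_Icc
  · rw [hj, gw_succ]; nlinarith [gw_pos k]
  · rw [hj, gw_succ]; nlinarith [gw_pos k]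

noncomputable def gridSup (ν : Measure ℝ) (k : ℕ) : ℝ≥0∞ := ⨆ j : ℤ, ν (gridI k j)

lemma gridSup_anti (ν : Measure ℝ) : Antitone (gridSup ν) := by
  refine antitone_nat_of_succ_le fun k => iSup_le fun j => ?_
  exact le_iSup_of_le (j / 2) (measure_mono (gridI_subset_succ k j))

lemma gridSup_le_one (ν : Measure ℝ) [IsProbabilityMeasure ν] (k : ℕ) : gridSup ν k ≤ 1 :=
  iSup_le fun _ => prob_le_one

lemma eps_le_quarter (k : ℕ) : ((2:ℝ≥0∞)⁻¹) ^ (k+2) ≤ 4⁻¹ := by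
  have h1 : ((2:ℝ≥0∞)⁻¹) ^ (k+2) = 2⁻¹ ^ k * 2⁻¹ ^ 2 := by rw [pow_add]
  have h2 : ((2:ℝ≥0∞)⁻¹) ^ 2 = 4⁻¹ := by
    rw [← ENNReal.inv_pow]; norm_num
  have h3 : ((2:ℝ≥0∞)⁻¹) ^ k ≤ 1 := pow_le_one' (by simp [ENNReal.inv_le_one]) k
  calc ((2:ℝ≥0∞)⁻¹) ^ (k+2) = 2⁻¹ ^ k * 4⁻¹ := by rw [h1, h2]
    _ ≤ 1 * 4⁻¹ := mul_le_mul_left h3 _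
    _ = 4⁻¹ := one_mul _

/-- If `ν` gives full mass to every grid scale (as a sup over cells), then `ν` is a Dirac mass. -/
lemma exists_dirac_of_gridSup (ν : Measure ℝ) [IsProbabilityMeasure ν]
    (h : ∀ k, gridSup ν k = 1) : ∃ x : ℝ, ν = Measure.dirac x := by
  have hch : ∀ k : ℕ, ∃ j : ℤ, (1 : ℝ≥0∞) ≤ ν (gridI (k+2) j) + (2:ℝ≥0∞)⁻¹ ^ (k+2) := by
    intro k
    have hpos : ((2:ℝ≥0∞)⁻¹ ^ (k+2)) ≠ 0 := pow_ne_zero _ (by norm_num)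
    have h1 : (1 : ℝ≥0∞) - (2:ℝ≥0∞)⁻¹ ^ (k+2) < gridSup ν (k+2) := by
      rw [h (k+2)]
      exact ENNReal.sub_lt_self ENNReal.one_ne_top one_ne_zero hpos
    rw [gridSup, lt_iSup_iff] at h1
    obtain ⟨j, hj⟩ := h1
    exact ⟨j, tsub_le_iff_right.mp hj.le⟩
  choose j hj using hch
  -- cells pairwise intersect
  have hinter : ∀ k m : ℕ, (gridI (k+2) (j k) ∩ gridI (m+2) (j m)).Nonempty := by
    intro k m
    by_contra hemp
    rw [Set.not_nonempty_iff_eq_empty] at hemp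
    have hun : ν (gridI (k+2) (j k) ∪ gridI (m+2) (j m))
        = ν (gridI (k+2) (j k)) + ν (gridI (m+2) (j m)) :=
      measure_union (Set.disjoint_iff_inter_eq_empty.mpr hemp) measurableSet_Icc
    have h1 : ν (gridI (k+2) (j k)) + ν (gridI (m+2) (j m)) ≤ 1 := by
      rw [← hun]; exact prob_le_one
    have key : (2:ℝ≥0∞) ≤ 1 + 2⁻¹ := by
      calc (2:ℝ≥0∞) = 1 + 1 := one_add_one_eq_two.symm
        _ ≤ (ν (gridI (k+2) (j k)) + 2⁻¹ ^ (k+2)) + (ν (gridI (m+2) (j m)) + 2⁻¹ ^ (m+2)) :=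
            add_le_add (hj k) (hj m)
        _ = (ν (gridI (k+2) (j k)) + ν (gridI (m+2) (j m))) + (2⁻¹ ^ (k+2) + 2⁻¹ ^ (m+2)) := by
            ring
        _ ≤ 1 + (4⁻¹ + 4⁻¹) := add_le_add h1 (add_le_add (eps_le_quarter k) (eps_le_quarter m))
        _ = 1 + 2⁻¹ := by
            congr 1
            rw [← two_mul]
            rw [show (4:ℝ≥0∞) = 2 * 2 by norm_num, ENNReal.mul_inv (by norm_num) (by norm_num)]
            rw [← mul_assoc, ENNReal.mul_inv_cancel (by norm_num) (by norm_num), one_mul]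
    have h2i : (2:ℝ≥0∞)⁻¹ < 1 := by
      rw [ENNReal.inv_lt_one]; exact ENNReal.one_lt_two
    have hlt : (1:ℝ≥0∞) + 2⁻¹ < 2 := by
      have := ENNReal.add_lt_add_left (a := (1:ℝ≥0∞)) ENNReal.one_ne_top h2i
      rwa [one_add_one_eq_two] at this
    exact absurd key (not_le.mpr hlt)
  -- left endpoints form a Cauchy sequence
  set l : ℕ → ℝ := fun k => ((j k : ℝ)) * gw (k+2) with hl
  have hdist : ∀ k m : ℕ, |l k - l m| ≤ gw (k+2) + gw (m+2) := by
    intro k m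
    obtain ⟨z, hzk, hzm⟩ := hinter k m
    rw [gridI, Set.mem_Icc] at hzk hzm
    have hk2 := hzk.2
    have hm2 := hzm.2
    rw [add_mul, one_mul] at hk2 hm2
    rw [abs_sub_le_iff]
    constructor <;> simp only [hl] <;>
      [linarith [hzk.1, hzm.1, gw_pos (k+2), gw_pos (m+2)];
       linarith [hzk.1, hzm.1, gw_pos (k+2), gw_pos (m+2)]]
  have hcauchy : CauchySeq l := by
    apply cauchySeq_of_le_geometric (2⁻¹ : ℝ) (1/2) (by norm_num)
    intro k
    rw [Real.dist_eq]
    calc |l k - l (k+1)| ≤ gw (k+2) + gw (k+1+2) := hdist k (k+1)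
      _ ≤ 1/2 * (2⁻¹)^k := by
        have h2 : gw (k+2) = (2⁻¹:ℝ)^k * (1/4) := by unfold gw; rw [pow_add]; norm_num
        have h3 : gw (k+3) = (2⁻¹:ℝ)^k * (1/8) := by unfold gw; rw [pow_add]; norm_num
        have hp : (0:ℝ) < (2⁻¹:ℝ)^k := pow_pos (by norm_num) k
        rw [show k+1+2 = k+3 by ring, h2, h3]; nlinarith
  obtain ⟨x, hx⟩ := cauchySeq_tendsto_of_complete hcauchy
  -- ν of every closed interval around x is 1
  have hIcc : ∀ ε : ℝ, 0 < ε → ν (Set.Icc (x - ε) (x + ε)) = 1 := by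
    intro ε hε
    have hev : ∀ᶠ k in atTop, (1:ℝ≥0∞) ≤ ν (Set.Icc (x - ε) (x + ε)) + 2⁻¹ ^ (k+2) := by
      have h1 : ∀ᶠ k in atTop, |l k - x| < ε/2 := by
        have := hx.eventually (Metric.ball_mem_nhds x (half_pos hε))
        filter_upwards [this] with k hk
        rw [Real.dist_eq] at hk; exact hk
      have h2 : ∀ᶠ k in (atTop : Filter ℕ), gw (k+2) < ε/2 := by
        have : Tendsto (fun k : ℕ => gw (k+2)) atTop (𝓝 0) := by
          apply Tendsto.comp (tendsto_pow_atTop_nhds_zero_of_lt_one (by norm_num) (by norm_num))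
          exact tendsto_add_atTop_nat 2
        exact this.eventually (gt_mem_nhds (half_pos hε))
      filter_upwards [h1, h2] with k hk1 hk2
      have hsub : gridI (k+2) (j k) ⊆ Set.Icc (x - ε) (x + ε) := by
        intro z hz
        rw [gridI, Set.mem_Icc] at hz
        have hz2 : z ≤ l k + gw (k+2) := by
          have h5 := hz.2; rw [add_mul, one_mul] at h5; simp only [hl]; linarith
        have hz1 : l k ≤ z := hz.1
        have habs := abs_sub_le_iff.mp hk1.le
        rw [Set.mem_Icc]
        constructor
        · linarith [habs.2, gw_pos (k+2)]
        · linarith [habs.1]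
      calc (1:ℝ≥0∞) ≤ ν (gridI (k+2) (j k)) + 2⁻¹ ^ (k+2) := hj k
        _ ≤ ν (Set.Icc (x - ε) (x + ε)) + 2⁻¹ ^ (k+2) :=
            add_le_add_left (measure_mono hsub) _
    -- pass to the limit
    have htend : Tendsto (fun k : ℕ => ν (Set.Icc (x - ε) (x + ε)) + (2:ℝ≥0∞)⁻¹ ^ (k+2))
        atTop (𝓝 (ν (Set.Icc (x - ε) (x + ε)) + 0)) := by
      apply Tendsto.add tendsto_const_nhds
      apply Tendsto.comp (ENNReal.tendsto_pow_atTop_nhds_zero_of_lt_one (by rw [ENNReal.inv_lt_one]; exact ENNReal.one_lt_two))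
      exact tendsto_add_atTop_nat 2
    rw [add_zero] at htend
    have h1 : (1:ℝ≥0∞) ≤ ν (Set.Icc (x - ε) (x + ε)) := ge_of_tendsto htend hev
    exact le_antisymm prob_le_one h1
  -- ν {x} = 1
  have hxone : ν {x} = 1 := by
    have hseteq : (⋂ n : ℕ, Set.Icc (x - 1/(n+1)) (x + 1/(n+1))) = {x} := by
      apply Set.eq_singleton_iff_unique_mem.mpr
      constructor
      · refine Set.mem_iInter.mpr fun n => ?_
        have : (0:ℝ) < 1/(n+1) := by positivity
        rw [Set.mem_Icc]; constructor <;> linarith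
      · intro z hz
        rw [Set.mem_iInter] at hz
        by_contra hne
        obtain ⟨n, hn⟩ := exists_nat_gt (1 / |z - x|)
        have habs : (0:ℝ) < |z - x| := abs_pos.mpr (sub_ne_zero.mpr hne)
        have h2 := hz n
        rw [Set.mem_Icc] at h2
        have h3 : |z - x| ≤ 1/(n+1) := abs_sub_le_iff.mpr ⟨by linarith [h2.2], by linarith [h2.1]⟩
        have h4 : 1 / |z - x| < n + 1 := by linarith
        have h5 : 1 / (1/(n+1) : ℝ) ≤ 1 / |z - x| := by
          apply one_div_le_one_div_of_le habs h3
        rw [one_div_one_div] at h5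
        linarith
    have hmeas : ∀ n : ℕ, NullMeasurableSet (Set.Icc (x - 1/(n+1)) (x + 1/(n+1))) ν :=
      fun n => measurableSet_Icc.nullMeasurableSet
    have hanti : Antitone (fun n : ℕ => Set.Icc (x - 1/(n+1)) (x + 1/(n+1))) := by
      intro a b hab
      apply Set.Icc_subset_Icc
      · have : (1:ℝ)/(b+1) ≤ 1/(a+1) := by
          apply one_div_le_one_div_of_le (by positivity) (by exact_mod_cast by omega)
        linarith
      · have : (1:ℝ)/(b+1) ≤ 1/(a+1) := by
          apply one_div_le_one_div_of_le (by positivity) (by exact_mod_cast by omega)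
        linarith
    have htd := tendsto_measure_iInter_atTop hmeas hanti ⟨0, measure_ne_top ν _⟩
    rw [hseteq] at htd
    have hconst : ∀ n : ℕ, (ν ∘ fun n : ℕ => Set.Icc (x - 1/(n+1)) (x + 1/(n+1))) n = 1 := by
      intro n
      simp only [Function.comp_apply]
      exact hIcc (1/(n+1)) (by positivity)
    rw [funext hconst] at htd
    exact (tendsto_nhds_unique tendsto_const_nhds htd).symm
  -- conclude ν = dirac x
  refine ⟨x, Measure.ext fun s hs => ?_⟩
  rw [Measure.dirac_apply' x hs]
  by_cases hxs : x ∈ s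
  · have h1 : (1:ℝ≥0∞) ≤ ν s := hxone ▸ measure_mono (Set.singleton_subset_iff.mpr hxs)
    rw [Set.indicator_of_mem hxs]
    exact le_antisymm prob_le_one h1
  · have h1 : ν s ≤ ν {x}ᶜ := measure_mono fun z hz => by
      simp only [Set.mem_compl_iff, Set.mem_singleton_iff]
      rintro rfl; exact hxs hz
    have h2 : ν {x}ᶜ = 0 := by
      rw [measure_compl (measurableSet_singleton x) (measure_ne_top ν _), hxone, measure_univ,
        tsub_self]
    rw [Set.indicator_of_notMem hxs]
    exact le_antisymm (h1.trans h2.le) (zero_le)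

section lims


variable {ν : ℕ → Measure ℝ} {μ : Measure ℝ}

lemma tail_closed (R : ℕ) : IsClosed {x : ℝ | (R:ℝ) ≤ |x|} := by
  have : {x : ℝ | (R:ℝ) ≤ |x|} = (fun x : ℝ => |x|) ⁻¹' Set.Ici (R:ℝ) := rfl
  rw [this]
  exact IsClosed.preimage (continuous_abs) isClosed_Ici

lemma tail_tendsto_zero (μ : Measure ℝ) [IsProbabilityMeasure μ] :
    Tendsto (fun R : ℕ => μ {x : ℝ | (R:ℝ) ≤ |x|}) atTop (𝓝 0) := by
  have hseteq : (⋂ R : ℕ, {x : ℝ | (R:ℝ) ≤ |x|}) = ∅ := by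
    ext z
    simp only [Set.mem_iInter, Set.mem_setOf_eq, Set.mem_empty_iff_false, iff_false, not_forall,
      not_le]
    obtain ⟨R, hR⟩ := exists_nat_gt |z|
    exact ⟨R, hR⟩
  have htd := tendsto_measure_iInter_atTop
    (fun R => (tail_closed R).measurableSet.nullMeasurableSet)
    (fun a b hab x hx => by
      simp only [Set.mem_setOf_eq] at hx ⊢
      exact le_trans (by exact_mod_cast hab) hx)
    ⟨0, measure_ne_top μ _⟩
  rw [hseteq] at htd
  simpa [Function.comp_def] using htd

/-- Portmanteau + tightness: the limsup of grid suprema is controlled by the grid supremum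
of the limit measure. -/
lemma limsup_gridSup_le (hν : ∀ n, IsProbabilityMeasure (ν n)) (hμ : IsProbabilityMeasure μ)
    (hcl : ∀ C : Set ℝ, IsClosed C → limsup (fun n => ν n C) atTop ≤ μ C) (k : ℕ) :
    limsup (fun n => gridSup (ν n) k) atTop ≤ gridSup μ k := by
  haveI := hμ
  apply ENNReal.le_of_forall_pos_le_add
  intro ε hε _
  -- choose a tail bound
  have htail := tail_tendsto_zero μ
  have hev : ∀ᶠ R : ℕ in atTop, μ {x : ℝ | (R:ℝ) ≤ |x|} < ε :=
    htail.eventually (gt_mem_nhds (by exact_mod_cast ENNReal.coe_pos.mpr hε))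
  obtain ⟨R, hR⟩ := hev.exists
  -- choose J with J * gw k > R + 1
  obtain ⟨J, hJ⟩ := exists_nat_gt ((R + 1) / gw k)
  have hJgw : (R:ℝ) + 1 < (J:ℝ) * gw k := by
    rw [div_lt_iff₀ (gw_pos k)] at hJ
    linarith
  -- large cells are inside the tail
  have hcell : ∀ j : ℤ, (J:ℤ) < |j| → gridI k j ⊆ {x : ℝ | (R:ℝ) ≤ |x|} := by
    intro j hj z hz
    rw [gridI, Set.mem_Icc] at hz
    simp only [Set.mem_setOf_eq]
    have hgw := gw_pos k
    rcases lt_abs.mp hj with h | h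
    · have hjr : (J:ℝ) ≤ (j:ℝ) := by exact_mod_cast h.le
      have h1 : (R:ℝ) + 1 < (j:ℝ) * gw k := by nlinarith
      have h2 : z ≥ (j:ℝ) * gw k := hz.1
      calc (R:ℝ) ≤ (j:ℝ) * gw k := by linarith
        _ ≤ z := h2
        _ ≤ |z| := le_abs_self z
    · have hjr : (j:ℝ) + 1 ≤ -(J:ℝ) := by
        have : j + 1 ≤ -(J:ℤ) := by omega
        exact_mod_cast this
      have h1 : ((j:ℝ) + 1) * gw k ≤ -((J:ℝ) * gw k) := by nlinarith
      have h2 : z ≤ ((j:ℝ) + 1) * gw k := hz.2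
      have h3 : z ≤ -((R:ℝ) + 1) := by nlinarith
      calc (R:ℝ) ≤ -z := by linarith
        _ ≤ |z| := neg_le_abs z
  -- bound each gridSup by a finite sup and the tail
  have hbound : ∀ n, gridSup (ν n) k ≤
      (Finset.Icc (-(J:ℤ)) (J:ℤ)).sup (fun j => ν n (gridI k j)) ⊔ ν n {x : ℝ | (R:ℝ) ≤ |x|} := by
    intro n
    refine iSup_le fun j => ?_
    by_cases hj : |j| ≤ (J:ℤ)
    · refine le_sup_of_le_left (Finset.le_sup (f := fun j => ν n (gridI k j)) ?_)
      rw [Finset.mem_Icc]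
      exact abs_le.mp hj
    · exact le_sup_of_le_right (measure_mono (hcell j (not_le.mp hj)))
  calc limsup (fun n => gridSup (ν n) k) atTop
      ≤ limsup (fun n => (Finset.Icc (-(J:ℤ)) (J:ℤ)).sup (fun j => ν n (gridI k j))
          ⊔ ν n {x : ℝ | (R:ℝ) ≤ |x|}) atTop :=
        limsup_le_limsup (Eventually.of_forall hbound)
    _ ≤ limsup (fun n => (Finset.Icc (-(J:ℤ)) (J:ℤ)).sup (fun j => ν n (gridI k j))) atTop
          ⊔ limsup (fun n => ν n {x : ℝ | (R:ℝ) ≤ |x|}) atTop := by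
        rw [← limsup_max]
    _ ≤ gridSup μ k ⊔ ε := by
        apply sup_le_sup
        · rw [limsup_finset_sup]
          apply Finset.sup_le fun j _ => ?_
          exact le_trans (hcl (gridI k j) isClosed_Icc) (le_iSup (fun j => μ (gridI k j)) j)
        · exact le_trans (hcl _ (tail_closed R)) hR.le
    _ ≤ gridSup μ k + ε := sup_le le_self_add le_add_self

lemma tendsto_tail_zero (hν : ∀ n, IsProbabilityMeasure (ν n)) (hμ : IsProbabilityMeasure μ)
    (hcl : ∀ C : Set ℝ, IsClosed C → limsup (fun n => ν n C) atTop ≤ μ C)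
    {b : ℕ → ℝ} (hb : Tendsto b atTop atTop) :
    Tendsto (fun n => ν n {x : ℝ | b n < |x|}) atTop (𝓝 0) := by
  haveI := hμ
  rw [ENNReal.tendsto_nhds_zero]
  intro ε hε
  have hev : ∀ᶠ R : ℕ in atTop, μ {x : ℝ | (R:ℝ) ≤ |x|} < ε :=
    (tail_tendsto_zero μ).eventually (gt_mem_nhds hε)
  obtain ⟨R, hR⟩ := hev.exists
  have h1 : ∀ᶠ n in atTop, (R:ℝ) ≤ b n := hb.eventually_ge_atTop (R:ℝ)
  have h2 : ∀ᶠ n in atTop, ν n {x : ℝ | (R:ℝ) ≤ |x|} < ε :=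
    eventually_lt_of_limsup_lt (lt_of_le_of_lt (hcl _ (tail_closed R)) hR)
  filter_upwards [h1, h2] with n hn1 hn2
  refine le_of_lt (lt_of_le_of_lt (measure_mono fun x hx => ?_) hn2)
  simp only [Set.mem_setOf_eq] at hx ⊢
  linarith

lemma closed_limsup_of_bcf (hν : ∀ n, IsProbabilityMeasure (ν n)) (hμ : IsProbabilityMeasure μ)
    (h : ∀ f : BoundedContinuousFunction ℝ ℝ,
      Tendsto (fun n => ∫ y, f y ∂(ν n)) atTop (𝓝 (∫ y, f y ∂μ))) :
    ∀ C : Set ℝ, IsClosed C → limsup (fun n => ν n C) atTop ≤ μ C := by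
  have htd := (ProbabilityMeasure.tendsto_iff_forall_integral_tendsto
    (μs := fun n => (⟨ν n, hν n⟩ : ProbabilityMeasure ℝ))
    (μ := (⟨μ, hμ⟩ : ProbabilityMeasure ℝ)) (F := atTop)).mpr h
  intro C hC
  exact ProbabilityMeasure.limsup_measure_closed_le_of_tendsto htd hC

end lims



/-- Defining property of a regular conditional distribution, in `lintegral` form:
for a `G`-measurable set `T`, `P({V ∈ B} ∩ T) = ∫⁻_T K(ω, B) dP`. -/
lemma kernel_setLIntegral
    {Ω : Type} {G m0 : MeasurableSpace Ω} {P : Measure Ω} [IsProbabilityMeasure P]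
    (hG : G ≤ m0) {V : Ω → ℝ} (hV : Measurable V)
    {κB : Ω → ℝ≥0∞} (hκB : Measurable κB) (hκB1 : ∀ ω, κB ω ≤ 1)
    {B : Set ℝ} (hB : MeasurableSet B)
    (hid : (fun ω => (κB ω).toReal) =ᵐ[P] P[Set.indicator {ω' | V ω' ∈ B} (fun _ => (1:ℝ)) | G])
    {T : Set Ω} (hT : MeasurableSet[G] T) :
    P ({ω | V ω ∈ B} ∩ T) = ∫⁻ ω in T, κB ω ∂P := by
  have hS : MeasurableSet {ω | V ω ∈ B} := hV hB
  have hint : Integrable (Set.indicator {ω' | V ω' ∈ B} fun _ => (1:ℝ)) P :=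
    (integrable_const 1).indicator hS
  have h1 : ∫ ω in T, (κB ω).toReal ∂P
      = ∫ ω in T, Set.indicator {ω' | V ω' ∈ B} (fun _ => (1:ℝ)) ω ∂P := by
    calc ∫ ω in T, (κB ω).toReal ∂P
        = ∫ ω in T, (P[Set.indicator {ω' | V ω' ∈ B} (fun _ => (1:ℝ)) | G]) ω ∂P :=
          setIntegral_congr_ae (hG _ hT) (hid.mono fun ω hω _ => hω)
      _ = _ := setIntegral_condExp hG hint hT
  have h2 : ∫ ω in T, (κB ω).toReal ∂P = (∫⁻ ω in T, κB ω ∂P).toReal := by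
    apply integral_toReal (hκB.aemeasurable.restrict)
    exact Eventually.of_forall fun ω => lt_of_le_of_lt (hκB1 ω) ENNReal.one_lt_top
  have h3 : ∫ ω in T, Set.indicator {ω' | V ω' ∈ B} (fun _ => (1:ℝ)) ω ∂P
      = (P ({ω | V ω ∈ B} ∩ T)).toReal := by
    rw [integral_indicator hS, setIntegral_const, smul_eq_mul, mul_one,
      measureReal_restrict_apply hS, measureReal_def]
  have hfin : ∫⁻ ω in T, κB ω ∂P ≠ ∞ := by
    have hle : ∫⁻ ω in T, κB ω ∂P ≤ P T := by
      calc ∫⁻ ω in T, κB ω ∂P ≤ ∫⁻ _ in T, 1 ∂P := lintegral_mono hκB1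
        _ = P T := setLIntegral_one T
    exact ne_top_of_le_ne_top (measure_ne_top P T) hle
  have h4 : (P ({ω | V ω ∈ B} ∩ T)).toReal = (∫⁻ ω in T, κB ω ∂P).toReal := by
    rw [← h3, ← h2, h1]
  exact (ENNReal.toReal_eq_toReal_iff' (measure_ne_top P _) hfin).mp h4

/-- **Corollary 2.4** (general principle). If `Y_n` is `G_n`-measurable, `a_n → ∞`, and the
regular conditional distribution of `a_n(Y_n − Y_∞)` given `G_n` converges weakly, for a.e.
`ω`, to a non-degenerate limit `κ_ω`, then `Y_∞` has no point masses. -/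
theorem corollary_2_4 {Ω : Type} [m0 : MeasurableSpace Ω] {P : Measure Ω}
    [IsProbabilityMeasure P]
    (G : ℕ → MeasurableSpace Ω) (hG_le : ∀ n, G n ≤ m0) (hG_mono : Monotone G)
    (Yinf : Ω → ℝ) (Yn : ℕ → Ω → ℝ)
    (hYinf : Measurable Yinf) (hYn : ∀ n, Measurable[G n] (Yn n))
    (a : ℕ → ℝ) (ha : Tendsto a atTop atTop)
    (K : ℕ → Ω → Measure ℝ)
    (hKmeas : ∀ n B, MeasurableSet B → Measurable fun ω => K n ω B)
    (hKprob : ∀ n ω, IsProbabilityMeasure (K n ω))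
    (hK : ∀ (n : ℕ) (B : Set ℝ), MeasurableSet B →
      (fun ω => (K n ω B).toReal) =ᵐ[P]
        P[Set.indicator {ω' | a n * (Yn n ω' - Yinf ω') ∈ B} (fun _ => (1 : ℝ)) | G n])
    (κ : Ω → Measure ℝ)
    (hκ : ∀ᵐ ω ∂P, IsProbabilityMeasure (κ ω) ∧ (∀ y : ℝ, κ ω ≠ Measure.dirac y) ∧
      ∀ f : BoundedContinuousFunction ℝ ℝ,
        Tendsto (fun n => ∫ y, f y ∂(K n ω)) atTop (𝓝 (∫ y, f y ∂(κ ω)))) :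
    ∀ y : ℝ, P {ω | Yinf ω = y} = 0 := by
  have hG_le' : (⨆ n, G n) ≤ m0 := iSup_le hG_le
  intro y
  by_contra hPA
  set V : ℕ → Ω → ℝ := fun n ω => a n * (Yn n ω - Yinf ω) with hVdef
  have hVmeas : ∀ n, Measurable (V n) := fun n =>
    measurable_const.mul (((hYn n).mono (hG_le n) le_rfl).sub hYinf)
  set A : Set Ω := {ω | Yinf ω = y} with hAdef
  have hAmeas : MeasurableSet A := hYinf (measurableSet_singleton y)
  -- a.e. facts about the limit kernel
  have haeP : ∀ᵐ ω ∂P, (∀ C : Set ℝ, IsClosed C → limsup (fun n => K n ω C) atTop ≤ κ ω C)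
      ∧ (∀ x : ℝ, κ ω ≠ Measure.dirac x) ∧ IsProbabilityMeasure (κ ω) := by
    filter_upwards [hκ] with ω hω
    exact ⟨closed_limsup_of_bcf (fun n => hKprob n ω) hω.1 hω.2.2, hω.2.1, hω.1⟩
  -- kernel identity
  have hker : ∀ (n : ℕ) (B : Set ℝ), MeasurableSet B → ∀ (T : Set Ω), MeasurableSet[G n] T →
      P ({ω | V n ω ∈ B} ∩ T) = ∫⁻ ω in T, K n ω B ∂P := by
    intro n B hB T hT
    refine kernel_setLIntegral (hG_le n) (hVmeas n) (hKmeas n B hB)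
      (fun ω => ?_) hB (hK n B hB) hT
    rw [← (hKprob n ω).measure_univ]
    exact measure_mono (Set.subset_univ B)
  -- Step 1: Yn → Yinf in measure
  have hTIM : TendstoInMeasure P (fun n => Yn n) atTop Yinf := by
    refine tendstoInMeasure_iff_dist.mpr ?_
    intro ε hε
    have hb : Tendsto (fun n => a n * (ε/2)) atTop atTop :=
      ha.atTop_mul_const (half_pos hε)
    have hBm : ∀ n, MeasurableSet {x : ℝ | a n * (ε/2) < |x|} := fun n =>
      measurableSet_lt measurable_const continuous_abs.measurable
    have hbnd : ∀ᶠ n in atTop, P {ω | ε ≤ dist (Yn n ω) (Yinf ω)}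
        ≤ ∫⁻ ω, K n ω {x : ℝ | a n * (ε/2) < |x|} ∂P := by
      filter_upwards [ha.eventually_ge_atTop 1] with n han
      have hsub : {ω | ε ≤ dist (Yn n ω) (Yinf ω)}
          ⊆ {ω | V n ω ∈ {x : ℝ | a n * (ε/2) < |x|}} := by
        intro ω hω
        simp only [Set.mem_setOf_eq, Real.dist_eq] at hω ⊢
        have h1 : |V n ω| = a n * |Yn n ω - Yinf ω| := by
          rw [hVdef]; simp only []
          rw [abs_mul, abs_of_pos (by linarith : (0:ℝ) < a n)]
        rw [h1]
        have : ε/2 < |Yn n ω - Yinf ω| := by linarith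
        exact mul_lt_mul_of_pos_left this (by linarith)
      calc P {ω | ε ≤ dist (Yn n ω) (Yinf ω)}
          ≤ P ({ω | V n ω ∈ {x : ℝ | a n * (ε/2) < |x|}} ∩ Set.univ) := by
            rw [Set.inter_univ]; exact measure_mono hsub
        _ = ∫⁻ ω in Set.univ, K n ω {x : ℝ | a n * (ε/2) < |x|} ∂P :=
            hker n _ (hBm n) Set.univ MeasurableSet.univ
        _ = ∫⁻ ω, K n ω {x : ℝ | a n * (ε/2) < |x|} ∂P := by rw [Measure.restrict_univ]
    have hdom : Tendsto (fun n => ∫⁻ ω, K n ω {x : ℝ | a n * (ε/2) < |x|} ∂P)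
        atTop (𝓝 0) := by
      have h0 : (0:ℝ≥0∞) = ∫⁻ _, (0:ℝ≥0∞) ∂P := lintegral_zero.symm
      rw [h0]
      apply tendsto_lintegral_of_dominated_convergence (fun _ => 1)
        (fun n => hKmeas n _ (hBm n))
        (fun n => Eventually.of_forall fun ω => by
          rw [← (hKprob n ω).measure_univ]; exact measure_mono (Set.subset_univ _))
        (by simp)
      filter_upwards [haeP] with ω hω
      exact tendsto_tail_zero (fun n => hKprob n ω) hω.2.2 hω.1 hb
    exact tendsto_of_tendsto_of_tendsto_of_le_of_le' tendsto_const_nhds hdom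
      (Eventually.of_forall fun n => zero_le) hbnd
  obtain ⟨ns, _, haes⟩ := hTIM.exists_seq_tendsto_ae
  -- Step 2: a (⨆ n, G n)-measurable version of the event A
  set g' : Ω → EReal := fun ω => liminf (fun k => ((Yn (ns k) ω : ℝ) : EReal)) atTop with hg'def
  have hg'meas : Measurable[⨆ n, G n] g' :=
    Measurable.liminf fun k => measurable_coe_real_ereal.comp
      ((hYn (ns k)).mono (le_iSup G (ns k)) le_rfl)
  set A' : Set Ω := g' ⁻¹' {((y : ℝ) : EReal)} with hA'def
  have hA'G : MeasurableSet[⨆ n, G n] A' := hg'meas (measurableSet_singleton _)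
  have hA'm0 : MeasurableSet A' := hG_le' _ hA'G
  have hAA' : ∀ᵐ ω ∂P, (ω ∈ A ↔ ω ∈ A') := by
    filter_upwards [haes] with ω hω
    have hg : g' ω = ((Yinf ω : ℝ) : EReal) :=
      Filter.Tendsto.liminf_eq ((continuous_coe_real_ereal.tendsto _).comp hω)
    constructor
    · intro hA
      have hyy : Yinf ω = y := hA
      simp only [hA'def, Set.mem_preimage, Set.mem_singleton_iff, hg, hyy]
    · intro hA'
      have h2 : ((Yinf ω : ℝ) : EReal) = ((y : ℝ) : EReal) := by
        rw [← hg]; exact hA'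
      have : Yinf ω = y := by exact_mod_cast h2
      exact this
  -- Step 3: Lévy's upward theorem
  set ℱ : Filtration ℕ m0 := ⟨G, hG_mono, hG_le⟩ with hFdef
  set gi : Ω → ℝ := A'.indicator (fun _ => 1) with hgidef
  have hgi_meas : StronglyMeasurable[⨆ n, ℱ n] gi :=
    stronglyMeasurable_const.indicator hA'G
  have hgi_int : Integrable gi P := (integrable_const 1).indicator hA'm0
  have hlevy : ∀ᵐ ω ∂P, Tendsto (fun m => (P[gi | ℱ m]) ω) atTop (𝓝 (gi ω)) :=
    hgi_int.tendsto_ae_condExp hgi_meas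
  -- the approximating G m - measurable sets
  set S : ℕ → Set Ω := fun m => {ω | (1:ℝ)/2 < (P[gi | G m]) ω} with hSdef
  have hSmeasG : ∀ m, MeasurableSet[G m] (S m) :=
    fun m => measurableSet_lt (@measurable_const ℝ Ω _ (G m) _)
      stronglyMeasurable_condExp.measurable
  have hSmeas : ∀ m, MeasurableSet (S m) := fun m => hG_le m _ (hSmeasG m)
  -- pointwise convergence of indicators
  have hptS : ∀ᵐ ω ∂P, (ω ∈ A → ∀ᶠ m in atTop, ω ∈ S m)
      ∧ (ω ∉ A → ∀ᶠ m in atTop, ω ∉ S m) := by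
    filter_upwards [hlevy, hAA'] with ω hω hiff
    constructor
    · intro hA
      have h1 : gi ω = 1 := by rw [hgidef]; exact Set.indicator_of_mem (hiff.mp hA) _
      rw [h1] at hω
      have := hω.eventually (lt_mem_nhds (by norm_num : (1:ℝ)/2 < 1))
      filter_upwards [this] with m hm
      exact hm
    · intro hA
      have h1 : gi ω = 0 := by
        rw [hgidef]; exact Set.indicator_of_notMem (fun h => hA (hiff.mpr h)) _
      rw [h1] at hω
      have := hω.eventually (gt_mem_nhds (by norm_num : (0:ℝ) < 1/2))
      filter_upwards [this] with m hm
      simp only [hSdef, Set.mem_setOf_eq, not_lt]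
      exact hm.le
  -- P(A \ S m) → 0
  have hStend : Tendsto (fun m => P (A \ S m)) atTop (𝓝 0) := by
    have heq : ∀ m, P (A \ S m) = ∫⁻ ω, Set.indicator (A \ S m) (fun _ => (1:ℝ≥0∞)) ω ∂P := by
      intro m
      rw [lintegral_indicator (hAmeas.diff (hSmeas m)), setLIntegral_one]
    simp only [heq]
    have h0 : (0:ℝ≥0∞) = ∫⁻ _, (0:ℝ≥0∞) ∂P := lintegral_zero.symm
    rw [h0]
    apply tendsto_lintegral_of_dominated_convergence (fun _ => 1)
      (fun m => (measurable_one.indicator (hAmeas.diff (hSmeas m))))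
      (fun m => Eventually.of_forall fun ω => by
        by_cases h : ω ∈ A \ S m <;>
          simp [Set.indicator_of_mem, Set.indicator_of_notMem, h])
      (by simp)
    filter_upwards [hptS] with ω hω
    by_cases hA : ω ∈ A
    · have := hω.1 hA
      refine Tendsto.congr' ?_ tendsto_const_nhds
      filter_upwards [this] with m hm
      exact (Set.indicator_of_notMem (fun hc => hc.2 hm) _).symm
    · refine Tendsto.congr' ?_ tendsto_const_nhds
      exact Eventually.of_forall fun m => (Set.indicator_of_notMem (fun hc => hA hc.1) _).symm
  -- grid supremum processes
  set sg : ℕ → ℕ → Ω → ℝ≥0∞ := fun n k ω => gridSup (K n ω) k with hsgdef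
  have hsg_meas : ∀ n k, Measurable (sg n k) := fun n k =>
    Measurable.iSup fun j => hKmeas n _ measurableSet_Icc
  have hsg_le_one : ∀ n k ω, sg n k ω ≤ 1 := fun n k ω => by
    haveI := hKprob n ω
    exact gridSup_le_one (K n ω) k
  set lsg : ℕ → Ω → ℝ≥0∞ := fun k ω => limsup (fun n => sg n k ω) atTop with hlsgdef
  have hlsg_meas : ∀ k, Measurable (lsg k) := fun k =>
    Measurable.limsup fun n => hsg_meas n k
  have hlsg_le_one : ∀ k ω, lsg k ω ≤ 1 := fun k ω => by
    refine limsup_le_of_le (by isBoundedDefault) (Eventually.of_forall fun n => hsg_le_one n k ω)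
  have hlsg_anti : ∀ ω, Antitone (fun k => lsg k ω) := by
    intro ω k1 k2 hk
    exact limsup_le_limsup (Eventually.of_forall fun n => gridSup_anti (K n ω) hk)
  -- Step 4: key inequality
  have hkey : ∀ k m n, m ≤ n →
      P A ≤ P (A \ S m) + ∫⁻ ω in S m, sg n k ω ∂P := by
    intro k m n hmn
    set c : Ω → ℝ := fun ω => a n * (Yn n ω - y) with hcdef
    have hcmeas : Measurable[G n] c :=
      measurable_const.mul ((hYn n).sub measurable_const)
    set jdx : Ω → ℤ := fun ω => ⌊c ω / gw k⌋ with hjdef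
    have hjmeas : Measurable[G n] jdx :=
      Int.measurable_floor.comp (hcmeas.div (@measurable_const ℝ Ω _ (G n) _))
    set T : ℤ → Set Ω := fun j => S m ∩ {ω | jdx ω = j} with hTdef
    have hTmeasG : ∀ j, MeasurableSet[G n] (T j) := fun j =>
      ((hG_mono hmn) _ (hSmeasG m)).inter (hjmeas (measurableSet_singleton j))
    set Bj : ℤ → Set ℝ := fun j => Set.Ico ((j:ℝ) * gw k) (((j:ℝ)+1) * gw k) with hBjdef
    have hBjmeas : ∀ j, MeasurableSet (Bj j) := fun j => measurableSet_Ico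
    -- A is covered
    have hcov : A ⊆ {ω | V n ω ∈ Bj (jdx ω)} := by
      intro ω hA
      have hy : Yinf ω = y := hA
      have hVc : V n ω = c ω := by rw [hVdef, hcdef]; simp only []; rw [hy]
      simp only [Set.mem_setOf_eq, hVc, hBjdef]
      constructor
      · have := Int.floor_le (c ω / gw k)
        rw [hjdef]
        calc (↑⌊c ω / gw k⌋ : ℝ) * gw k ≤ (c ω / gw k) * gw k := by
              exact mul_le_mul_of_nonneg_right this (gw_pos k).le
          _ = c ω := div_mul_cancel₀ _ (gw_pos k).ne'
      · have := Int.lt_floor_add_one (c ω / gw k)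
        rw [hjdef]
        calc c ω = (c ω / gw k) * gw k := (div_mul_cancel₀ _ (gw_pos k).ne').symm
          _ < (↑⌊c ω / gw k⌋ + 1) * gw k := by
              exact mul_lt_mul_of_pos_right this (gw_pos k)
    -- decompose over the cells
    have hdecomp : S m ∩ {ω | V n ω ∈ Bj (jdx ω)} = ⋃ j : ℤ, (T j ∩ {ω | V n ω ∈ Bj j}) := by
      ext ω
      simp only [Set.mem_inter_iff, Set.mem_iUnion, hTdef, Set.mem_setOf_eq]
      constructor
      · rintro ⟨hS, hB⟩; exact ⟨jdx ω, ⟨hS, rfl⟩, hB⟩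
      · rintro ⟨j, ⟨hS, rfl⟩, hB⟩; exact ⟨hS, hB⟩
    have hdisj : Pairwise (Function.onFun Disjoint fun j => T j ∩ {ω | V n ω ∈ Bj j}) := by
      intro j1 j2 hne
      apply Set.disjoint_left.mpr
      rintro ω ⟨⟨_, hj1⟩, _⟩ ⟨⟨_, hj2⟩, _⟩
      exact hne (hj1.symm.trans hj2)
    have hmeasj : ∀ j : ℤ, MeasurableSet (T j ∩ {ω | V n ω ∈ Bj j}) := fun j =>
      (hG_le n _ (hTmeasG j)).inter ((hVmeas n) (hBjmeas j))
    have hsum : P (S m ∩ {ω | V n ω ∈ Bj (jdx ω)})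
        = ∑' j : ℤ, P (T j ∩ {ω | V n ω ∈ Bj j}) := by
      rw [hdecomp, measure_iUnion hdisj hmeasj]
    -- each summand via the kernel
    have hterm : ∀ j : ℤ, P (T j ∩ {ω | V n ω ∈ Bj j}) = ∫⁻ ω in T j, K n ω (Bj j) ∂P := by
      intro j
      rw [Set.inter_comm]
      exact hker n (Bj j) (hBjmeas j) (T j) (hTmeasG j)
    -- bound by the grid supremum
    have hbnd : ∀ j : ℤ, ∫⁻ ω in T j, K n ω (Bj j) ∂P ≤ ∫⁻ ω in T j, sg n k ω ∂P := by
      intro j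
      apply lintegral_mono fun ω => ?_
      calc K n ω (Bj j) ≤ K n ω (gridI k j) := measure_mono Set.Ico_subset_Icc_self
        _ ≤ sg n k ω := le_iSup (fun j => K n ω (gridI k j)) j
    have hTdisj : Pairwise (Function.onFun Disjoint T) := by
      intro j1 j2 hne
      apply Set.disjoint_left.mpr
      rintro ω ⟨_, hj1⟩ ⟨_, hj2⟩
      exact hne ((show jdx ω = j1 from hj1).symm.trans (show jdx ω = j2 from hj2))
    have hTunion : (⋃ j : ℤ, T j) = S m := by
      ext ω
      simp only [Set.mem_iUnion, hTdef, Set.mem_inter_iff, Set.mem_setOf_eq]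
      constructor
      · rintro ⟨j, hS, _⟩; exact hS
      · intro hS; exact ⟨jdx ω, hS, rfl⟩
    have hsum2 : ∑' j : ℤ, ∫⁻ ω in T j, sg n k ω ∂P = ∫⁻ ω in S m, sg n k ω ∂P := by
      rw [← lintegral_iUnion (fun j => hG_le n _ (hTmeasG j)) hTdisj, hTunion]
    -- put it together
    have hcov2 : A ⊆ (A \ S m) ∪ (S m ∩ {ω | V n ω ∈ Bj (jdx ω)}) := by
      intro ω hA
      by_cases hS : ω ∈ S m
      · exact Or.inr ⟨hS, hcov hA⟩
      · exact Or.inl ⟨hA, hS⟩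
    calc P A ≤ P ((A \ S m) ∪ (S m ∩ {ω | V n ω ∈ Bj (jdx ω)})) := measure_mono hcov2
      _ ≤ P (A \ S m) + P (S m ∩ {ω | V n ω ∈ Bj (jdx ω)}) := measure_union_le _ _
      _ = P (A \ S m) + ∑' j : ℤ, P (T j ∩ {ω | V n ω ∈ Bj j}) := by rw [hsum]
      _ ≤ P (A \ S m) + ∑' j : ℤ, ∫⁻ ω in T j, sg n k ω ∂P := by
          apply add_le_add_right
          apply Summable.tsum_le_tsum (fun j => (hterm j) ▸ hbnd j) ENNReal.summable ENNReal.summable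
      _ = P (A \ S m) + ∫⁻ ω in S m, sg n k ω ∂P := by rw [hsum2]
  -- Step 5: limsup over n
  have hkey2 : ∀ k m, P A ≤ P (A \ S m) + ∫⁻ ω in S m, lsg k ω ∂P := by
    intro k m
    have h1 : P A ≤ P (A \ S m) + limsup (fun n => ∫⁻ ω in S m, sg n k ω ∂P) atTop := by
      have hfreq : ∀ᶠ n in atTop, P A ≤ P (A \ S m) + ∫⁻ ω in S m, sg n k ω ∂P := by
        filter_upwards [eventually_ge_atTop m] with n hn
        exact hkey k m n hn
      have h2 := le_limsup_of_frequently_le hfreq.frequently (by isBoundedDefault)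
      rwa [limsup_const_add atTop _ _ (by isBoundedDefault) (by isBoundedDefault)] at h2
    refine h1.trans (add_le_add_right ?_ _)
    have h3 := limsup_lintegral_le (μ := P.restrict (S m)) (f := fun n ω => sg n k ω)
      (fun _ => 1) (fun n => hsg_meas n k)
      (fun n => Eventually.of_forall fun ω => hsg_le_one n k ω)
      (by rw [lintegral_one]; exact (measure_ne_top _ _))
    exact h3
  -- Step 6: m → ∞
  have hkey3 : ∀ k, P A ≤ ∫⁻ ω in A, lsg k ω ∂P := by
    intro k
    have htd : Tendsto (fun m => P (A \ S m) + ∫⁻ ω in S m, lsg k ω ∂P) atTop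
        (𝓝 (0 + ∫⁻ ω in A, lsg k ω ∂P)) := by
      apply Tendsto.add hStend
      have heq1 : ∀ m, ∫⁻ ω in S m, lsg k ω ∂P
          = ∫⁻ ω, Set.indicator (S m) (lsg k) ω ∂P := by
        intro m; rw [lintegral_indicator (hSmeas m)]
      have heq2 : ∫⁻ ω in A, lsg k ω ∂P = ∫⁻ ω, Set.indicator A (lsg k) ω ∂P := by
        rw [lintegral_indicator hAmeas]
      simp only [heq1, heq2]
      apply tendsto_lintegral_of_dominated_convergence (fun _ => 1)
        (fun m => (hlsg_meas k).indicator (hSmeas m))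
        (fun m => Eventually.of_forall fun ω => by
          by_cases h : ω ∈ S m
          · rw [Set.indicator_of_mem h]; exact hlsg_le_one k ω
          · rw [Set.indicator_of_notMem h]; exact zero_le)
        (by simp)
      filter_upwards [hptS] with ω hω
      by_cases hA : ω ∈ A
      · rw [Set.indicator_of_mem hA]
        refine Tendsto.congr' ?_ tendsto_const_nhds
        filter_upwards [hω.1 hA] with m hm
        exact (Set.indicator_of_mem hm _).symm
      · rw [Set.indicator_of_notMem hA]
        refine Tendsto.congr' ?_ tendsto_const_nhds
        filter_upwards [hω.2 hA] with m hm
        exact (Set.indicator_of_notMem hm _).symm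
    rw [zero_add] at htd
    exact ge_of_tendsto htd (Eventually.of_forall fun m => hkey2 k m)
  -- Step 7: k → ∞
  set linf : Ω → ℝ≥0∞ := fun ω => ⨅ k, lsg k ω with hlinfdef
  have hlinf_meas : Measurable linf := Measurable.iInf hlsg_meas
  have hkey4 : P A ≤ ∫⁻ ω in A, linf ω ∂P := by
    have h1 : ∫⁻ ω in A, linf ω ∂P = ⨅ k, ∫⁻ ω in A, lsg k ω ∂P := by
      apply lintegral_iInf (fun k => hlsg_meas k) (fun k1 k2 hk ω => hlsg_anti ω hk)
      refine ne_top_of_le_ne_top (measure_ne_top P A) ?_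
      calc ∫⁻ ω in A, lsg 0 ω ∂P ≤ ∫⁻ _ in A, 1 ∂P := lintegral_mono fun ω => hlsg_le_one 0 ω
        _ = P A := setLIntegral_one A
    rw [h1]
    exact le_iInf hkey3
  -- Step 8: linf < 1 a.e.
  have hlinf_lt : ∀ᵐ ω ∂P, linf ω < 1 := by
    filter_upwards [haeP] with ω hω
    haveI := hω.2.2
    have h1 : ∀ k, lsg k ω ≤ gridSup (κ ω) k := fun k =>
      limsup_gridSup_le (fun n => hKprob n ω) hω.2.2 hω.1 k
    have h2 : linf ω ≤ ⨅ k, gridSup (κ ω) k := le_iInf fun k => (iInf_le _ k).trans (h1 k)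
    by_contra hc
    push_neg at hc
    have h3 : ∀ k, gridSup (κ ω) k = 1 := by
      intro k
      refine le_antisymm (gridSup_le_one (κ ω) k) ?_
      calc (1:ℝ≥0∞) ≤ linf ω := hc
        _ ≤ ⨅ k, gridSup (κ ω) k := h2
        _ ≤ gridSup (κ ω) k := iInf_le _ k
    obtain ⟨x, hx⟩ := exists_dirac_of_gridSup (κ ω) h3
    exact hω.2.1 x hx
  -- Step 9: contradiction
  have hcover : A ∩ {ω | linf ω < 1} ⊆ ⋃ q : ℕ, A ∩ {ω | linf ω + ((q:ℝ≥0∞))⁻¹ ≤ 1} := by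
    rintro ω ⟨hA, hlt⟩
    have hnz : (1:ℝ≥0∞) - linf ω ≠ 0 := by
      simp only [ne_eq, tsub_eq_zero_iff_le, not_le]
      exact hlt
    obtain ⟨q, hq⟩ := ENNReal.exists_inv_nat_lt hnz
    refine Set.mem_iUnion.mpr ⟨q, hA, ?_⟩
    have h1 : linf ω + (q:ℝ≥0∞)⁻¹ < linf ω + (1 - linf ω) :=
      ENNReal.add_lt_add_left (ne_top_of_le_ne_top ENNReal.one_ne_top
        ((hlsg_le_one 0 ω).trans' (iInf_le _ 0))) hq
    have h2 : linf ω + (1 - linf ω) = 1 := add_tsub_cancel_of_le hlt.le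
    exact (h1.trans_eq h2).le
  have hAeq : P (A ∩ {ω | linf ω < 1}) = P A := by
    apply measure_congr
    filter_upwards [hlinf_lt] with ω hω
    simp only [Set.mem_inter_iff, Set.mem_setOf_eq, eq_iff_iff]
    exact ⟨fun h => h.1, fun h => ⟨h, hω⟩⟩
  have hexq : ∃ q : ℕ, P (A ∩ {ω | linf ω + ((q:ℝ≥0∞))⁻¹ ≤ 1}) ≠ 0 := by
    by_contra hc
    push_neg at hc
    have h1 : P (⋃ q : ℕ, A ∩ {ω | linf ω + ((q:ℝ≥0∞))⁻¹ ≤ 1}) = 0 :=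
      measure_iUnion_null fun q => hc q
    have h2 : P (A ∩ {ω | linf ω < 1}) = 0 :=
      measure_mono_null hcover h1
    rw [hAeq] at h2
    exact hPA h2
  obtain ⟨q, hq⟩ := hexq
  set D : Set Ω := A ∩ {ω | linf ω + ((q:ℝ≥0∞))⁻¹ ≤ 1} with hDdef
  have hDmeas : MeasurableSet D := hAmeas.inter
    (measurableSet_le (hlinf_meas.add measurable_const) measurable_const)
  have hDsubA : D ⊆ A := Set.inter_subset_left
  -- evaluate the integral
  have hsplit : ∫⁻ ω in A, linf ω ∂P = ∫⁻ ω in D, linf ω ∂P + ∫⁻ ω in A \ D, linf ω ∂P := by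
    rw [← lintegral_union (hAmeas.diff hDmeas) Set.disjoint_sdiff_right,
      Set.union_diff_cancel hDsubA]
  have hD1 : ∫⁻ ω in D, linf ω ∂P + ((q:ℝ≥0∞))⁻¹ * P D ≤ P D := by
    have h1 : ∫⁻ ω in D, (linf ω + ((q:ℝ≥0∞))⁻¹) ∂P ≤ ∫⁻ _ in D, 1 ∂P := by
      apply setLIntegral_mono measurable_const
      intro ω hω
      exact hω.2
    rwa [lintegral_add_right _ measurable_const, setLIntegral_const, setLIntegral_one] at h1
  have hD2 : ∫⁻ ω in A \ D, linf ω ∂P ≤ P (A \ D) := by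
    calc ∫⁻ ω in A \ D, linf ω ∂P ≤ ∫⁻ _ in A \ D, 1 ∂P :=
        lintegral_mono fun ω => (iInf_le _ 0).trans (hlsg_le_one 0 ω)
      _ = P (A \ D) := setLIntegral_one _
  have hPsplit : P D + P (A \ D) = P A := by
    rw [← measure_union Set.disjoint_sdiff_right (hAmeas.diff hDmeas),
      Set.union_diff_cancel hDsubA]
  have hfinal : P A + ((q:ℝ≥0∞))⁻¹ * P D ≤ P A := by
    calc P A + ((q:ℝ≥0∞))⁻¹ * P D
        ≤ ∫⁻ ω in A, linf ω ∂P + ((q:ℝ≥0∞))⁻¹ * P D := add_le_add_left hkey4 _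
      _ = (∫⁻ ω in D, linf ω ∂P + ((q:ℝ≥0∞))⁻¹ * P D) + ∫⁻ ω in A \ D, linf ω ∂P := by
          rw [hsplit]; ring
      _ ≤ P D + P (A \ D) := add_le_add hD1 hD2
      _ = P A := hPsplit
  have hzero : ((q:ℝ≥0∞))⁻¹ * P D = 0 := by
    have h1 : P A + ((q:ℝ≥0∞))⁻¹ * P D ≤ P A + 0 := by rwa [add_zero]
    exact le_antisymm ((ENNReal.add_le_add_iff_left (measure_ne_top P A)).mp h1) (zero_le)
  rcases mul_eq_zero.mp hzero with h | h
  · exact (ENNReal.inv_ne_zero.mpr (ENNReal.natCast_ne_top q)) h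
  · exact hq h

end RRUPaper
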